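/- arXiv:2102.01778 — 4 statements merged into one kernel-verified Lean document; each statement's English description precedes it below -/
import Mathlib

section
/- For every integer n ≥ 3, the divisor function satisfies log d(n) ≤ C · (log n)/(log log n) for some absolute constant C, i.e., log d(n) = o(log n). -/
open Real Finset

/-- `d n` is the number of positive divisors of `n`. -/
noncomputable def divFun (n : ℕ) : ℕ := n.divisors.card

lemma log_divFun_eq {n : ℕ} (hn0 : n ≠ 0) :
    Real.log (divFun n) = ∑ p ∈ n.primeFactors, Real.log (n.factorization p + 1) := by
  rw [divFun, Nat.card_divisors hn0, Finset.prod_congr rfl (fun p _ => rfl)]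
  push_cast
  rw [Real.log_prod]
  intro p _
  positivity

lemma log_eq_sum_factorization {n : ℕ} (hn0 : n ≠ 0) :
    Real.log n = ∑ p ∈ n.primeFactors, (n.factorization p : ℝ) * Real.log p := by
  conv_lhs => rw [← Nat.factorization_prod_pow_eq_self hn0]
  rw [Finsupp.prod, Nat.support_factorization]
  push_cast
  rw [Real.log_prod (fun p hp => by
    have h2 := (Nat.prime_of_mem_primeFactors hp).two_le
    have ha := Nat.Prime.factorization_pos_of_dvd (Nat.prime_of_mem_primeFactors hp) hn0 (Nat.dvd_of_mem_primeFactors hp)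
    have : (0:ℝ) < (p:ℝ) ^ n.factorization p := by positivity
    exact ne_of_gt this)]
  exact Finset.sum_congr rfl fun p _ => by rw [Real.log_pow]

/-- For every integer `n ≥ 3`, `log d(n) ≤ C · log n / log log n` for an absolute constant `C`. -/
theorem log_divisor_bound :
    ∃ C : ℝ, 0 < C ∧ ∀ n : ℕ, 3 ≤ n →
      Real.log (divFun n) ≤ C * (Real.log n / Real.log (Real.log n)) := by
  refine ⟨64, by norm_num, fun n hn => ?_⟩
  have hn0 : n ≠ 0 := by omega
  have hn3 : (3:ℝ) ≤ n := by exact_mod_cast hn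
  set L := Real.log n with hLdef
  have hL1 : 1 < L := by
    have h3 : (1:ℝ) < Real.log 3 := by
      rw [show (1:ℝ) = Real.log (Real.exp 1) by simp]
      exact Real.log_lt_log (Real.exp_pos 1) (by linarith [Real.exp_one_lt_d9])
    exact lt_of_lt_of_le h3 (Real.log_le_log (by norm_num) hn3)
  have hL0 : 0 < L := by linarith
  set l := Real.log L with hldef
  have hl0 : 0 < l := Real.log_pos hL1
  rw [show (64:ℝ) * (L / l) = (64 * L) / l by ring, le_div_iff₀ hl0]
  -- basic facts
  have hd := log_divFun_eq hn0
  have hLsum := log_eq_sum_factorization hn0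
  have hterm_nonneg : ∀ p ∈ n.primeFactors, 0 ≤ (n.factorization p : ℝ) * Real.log p := by
    intro p hp
    have h1 : (1:ℝ) ≤ p := by
      exact_mod_cast (Nat.prime_of_mem_primeFactors hp).one_lt.le
    have := Real.log_nonneg h1
    positivity
  have hfac_le : ∀ p ∈ n.primeFactors, (n.factorization p : ℝ) * Real.log p ≤ L := by
    intro p hp
    rw [hLdef, hLsum]
    exact Finset.single_le_sum hterm_nonneg hp
  have ha_le : ∀ p ∈ n.primeFactors, (n.factorization p : ℝ) ≤ 2 * L := by
    intro p hp
    have hp2 : (2:ℝ) ≤ p := by exact_mod_cast (Nat.prime_of_mem_primeFactors hp).two_le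
    have hlog2 : (1:ℝ)/2 ≤ Real.log 2 := by linarith [Real.log_two_gt_d9]
    have h1 : (n.factorization p : ℝ) * Real.log 2 ≤ (n.factorization p : ℝ) * Real.log p :=
      mul_le_mul_of_nonneg_left (Real.log_le_log (by norm_num) hp2) (by positivity)
    have h2 := hfac_le p hp
    nlinarith [Nat.cast_nonneg (α := ℝ) (n.factorization p)]
  have hd1 : 0 < divFun n := by
    rw [divFun]
    exact Finset.card_pos.2 ⟨n, Nat.mem_divisors_self n hn0⟩
  have hdnn : (0:ℝ) ≤ Real.log (divFun n) := by
    apply Real.log_nonneg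
    exact_mod_cast hd1
  rcases le_or_gt l 64 with hcase | hcase
  · -- easy case: log d(n) ≤ L
    have hdn : divFun n ≤ n := by
      rw [divFun]
      calc n.divisors.card ≤ (Finset.Icc 1 n).card := by
            apply Finset.card_le_card
            intro d hd
            rw [Finset.mem_Icc]
            exact ⟨Nat.pos_of_mem_divisors hd, Nat.divisor_le hd⟩
        _ = n := by rw [Nat.card_Icc]; omega
    have hdle : Real.log (divFun n) ≤ L := by
      rw [hLdef]
      apply Real.log_le_log (by exact_mod_cast hd1)
      exact_mod_cast hdn
    nlinarith
  · -- hard case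
    set y : ℝ := L / l ^ 2 with hydef
    have hy0 : 0 < y := by positivity
    have hlogl : Real.log l ≤ l / 4 := by
      have h8 : (8:ℝ) ≤ Real.sqrt l := by
        have : Real.sqrt 64 ≤ Real.sqrt l := Real.sqrt_le_sqrt hcase.le
        rwa [show (64:ℝ) = 8^2 by norm_num, Real.sqrt_sq (by norm_num : (0:ℝ) ≤ 8)] at this
      have hsq2 : Real.sqrt l * Real.sqrt l = l := Real.mul_self_sqrt hl0.le
      have hls := Real.log_sqrt hl0.le
      have := Real.log_le_sub_one_of_pos (Real.sqrt_pos.2 hl0)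
      nlinarith
    have hlogy : l / 2 ≤ Real.log y := by
      rw [hydef, Real.log_div (ne_of_gt hL0) (by positivity), Real.log_pow]
      push_cast
      linarith
    rw [hd, ← Finset.sum_filter_add_sum_filter_not n.primeFactors (fun p : ℕ => (p:ℝ) ≤ y)]
    -- small primes
    have hsmall : ∑ p ∈ n.primeFactors.filter (fun p : ℕ => (p:ℝ) ≤ y),
        Real.log (n.factorization p + 1) ≤ y * (2 * l) := by
      have hsub : n.primeFactors.filter (fun p : ℕ => (p:ℝ) ≤ y) ⊆ Finset.Icc 1 ⌊y⌋₊ := by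
        intro p hp
        rw [Finset.mem_filter] at hp
        rw [Finset.mem_Icc]
        exact ⟨(Nat.prime_of_mem_primeFactors hp.1).one_lt.le, Nat.le_floor hp.2⟩
      have hcard : (n.primeFactors.filter (fun p : ℕ => (p:ℝ) ≤ y)).card ≤ ⌊y⌋₊ := by
        have := Finset.card_le_card hsub
        simpa [Nat.card_Icc] using this
      have hterm : ∀ p ∈ n.primeFactors.filter (fun p : ℕ => (p:ℝ) ≤ y),
          Real.log (n.factorization p + 1) ≤ 2 * l := by
        intro p hp
        rw [Finset.mem_filter] at hp
        have h1 : (n.factorization p : ℝ) + 1 ≤ 3 * L := by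
          have := ha_le p hp.1; linarith
        have h2 : Real.log ((n.factorization p : ℝ) + 1) ≤ Real.log (3 * L) :=
          Real.log_le_log (by positivity) h1
        have h3 : Real.log (3 * L) = Real.log 3 + l := by
          rw [Real.log_mul (by norm_num) (ne_of_gt hL0), hldef]
        have h4 : Real.log 3 ≤ 2 := by
          have := Real.log_le_sub_one_of_pos (show (0:ℝ) < 3 by norm_num); linarith
        linarith
      have hc := Finset.sum_le_card_nsmul _ _ _ hterm
      rw [nsmul_eq_mul] at hc
      have h1 : ((n.primeFactors.filter (fun p : ℕ => (p:ℝ) ≤ y)).card : ℝ) ≤ y := by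
        calc ((n.primeFactors.filter (fun p : ℕ => (p:ℝ) ≤ y)).card : ℝ)
            ≤ (⌊y⌋₊ : ℝ) := by exact_mod_cast hcard
          _ ≤ y := Nat.floor_le hy0.le
      nlinarith
    -- large primes
    have hlarge : ∑ p ∈ n.primeFactors.filter (fun p : ℕ => ¬(p:ℝ) ≤ y),
        Real.log (n.factorization p + 1) ≤ (2 / l) * L := by
      have hterm : ∀ p ∈ n.primeFactors.filter (fun p : ℕ => ¬(p:ℝ) ≤ y),
          Real.log (n.factorization p + 1) ≤ (2 / l) * ((n.factorization p : ℝ) * Real.log p) := by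
        intro p hp
        rw [Finset.mem_filter] at hp
        have hpy : y < p := lt_of_not_ge hp.2
        have hlp : l / 2 ≤ Real.log p := le_trans hlogy (Real.log_le_log hy0 hpy.le)
        have h1 : Real.log ((n.factorization p : ℝ) + 1) ≤ (n.factorization p : ℝ) := by
          have := Real.log_le_sub_one_of_pos
            (show (0:ℝ) < (n.factorization p : ℝ) + 1 by positivity)
          linarith
        have hann : (0:ℝ) ≤ (n.factorization p : ℝ) := Nat.cast_nonneg _
        have h2 : (n.factorization p : ℝ) * (l / 2) ≤ (n.factorization p : ℝ) * Real.log p :=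
          mul_le_mul_of_nonneg_left hlp hann
        have h3 : (n.factorization p : ℝ) ≤ (2 / l) * ((n.factorization p : ℝ) * Real.log p) := by
          rw [div_mul_eq_mul_div, le_div_iff₀ hl0]
          nlinarith
        linarith
      calc ∑ p ∈ n.primeFactors.filter (fun p : ℕ => ¬(p:ℝ) ≤ y),
            Real.log (n.factorization p + 1)
          ≤ ∑ p ∈ n.primeFactors.filter (fun p : ℕ => ¬(p:ℝ) ≤ y),
            (2 / l) * ((n.factorization p : ℝ) * Real.log p) := Finset.sum_le_sum hterm
        _ = (2 / l) * ∑ p ∈ n.primeFactors.filter (fun p : ℕ => ¬(p:ℝ) ≤ y),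
            ((n.factorization p : ℝ) * Real.log p) := by rw [Finset.mul_sum]
        _ ≤ (2 / l) * L := by
            apply mul_le_mul_of_nonneg_left _ (by positivity)
            rw [hLdef, hLsum]
            exact Finset.sum_le_sum_of_subset_of_nonneg (Finset.filter_subset _ _)
              (fun p hp _ => hterm_nonneg p hp)
    have hfinal : (y * (2 * l) + (2 / l) * L) * l = 4 * L := by
      rw [hydef]; field_simp; ring
    have hmul := mul_le_mul_of_nonneg_right (add_le_add hsmall hlarge) hl0.le
    linarith
end

section
/- For N ≥ 3, the summatory divisor function satisfies D(N) = N log N + (2γ − 1)N + O(√N), where γ is Euler's constant; in particular D(N) = O(N log N). -/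
set_option maxHeartbeats 1000000

open Finset

/-- `D N = ∑_{n=1}^N d(n)`, the summatory divisor function. -/
noncomputable def sumDiv (N : ℕ) : ℕ := ∑ n ∈ Finset.Icc 1 N, divFun n

lemma sumDiv_eq_sum_div (N : ℕ) : sumDiv N = ∑ k ∈ Icc 1 N, N / k := by
  have hIcc : Icc 1 N = Ioc 0 N := rfl
  rw [sumDiv, hIcc]
  have h1 : ∀ n ∈ Ioc 0 N, divFun n = ((Ioc 0 N).filter (· ∣ n)).card := by
    intro n hn
    rw [mem_Ioc] at hn
    show n.divisors.card = _
    congr 1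
    ext d
    simp only [Nat.mem_divisors, mem_filter, mem_Ioc]
    constructor
    · rintro ⟨hd, hne⟩
      exact ⟨⟨Nat.pos_of_dvd_of_pos hd hn.1, (Nat.le_of_dvd hn.1 hd).trans hn.2⟩, hd⟩
    · rintro ⟨_, hd⟩
      exact ⟨hd, hn.1.ne'⟩
  rw [Finset.sum_congr rfl h1]
  simp_rw [Finset.card_filter]
  rw [Finset.sum_comm]
  refine Finset.sum_congr rfl fun k hk => ?_
  rw [← Finset.card_filter]
  exact Nat.Ioc_filter_dvd_card_eq_div N k

lemma hyperbola (N : ℕ) (hN : 1 ≤ N) :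
    ∑ k ∈ Icc 1 N, N / k + N.sqrt * N.sqrt = 2 * ∑ k ∈ Icc 1 N.sqrt, N / k := by
  set M := N.sqrt with hM
  have hM1 : 1 ≤ M := Nat.sqrt_pos.mpr hN
  have hMM : M * M ≤ N := by have := Nat.sqrt_le' N; nlinarith [this]
  have hMN : M ≤ N := le_trans (Nat.le_mul_of_pos_left M hM1) hMM
  have hNlt : N < (M + 1) * (M + 1) := by have := Nat.lt_succ_sqrt' N; nlinarith [this]
  have hIcc : ∀ a b : ℕ, Icc 1 b = Ioc 0 b := fun a b => rfl
  have hdivge : ∀ k ∈ Ioc 0 M, M ≤ N / k := by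
    intro k hk
    rw [mem_Ioc] at hk
    rw [Nat.le_div_iff_mul_le hk.1]
    calc M * k ≤ M * M := Nat.mul_le_mul_left M hk.2
    _ ≤ N := hMM
  have key : ∑ n ∈ Ioc M N, N / n = ∑ k ∈ Ioc 0 M, (N / k - M) := by
    have step1 : ∀ n ∈ Ioc M N, N / n = ∑ k ∈ Ioc 0 M, if k ≤ N / n then 1 else 0 := by
      intro n hn
      rw [mem_Ioc] at hn
      have hle : N / n ≤ M := by
        by_contra h
        push_neg at h
        have : M + 1 ≤ N / n := h
        have := (Nat.le_div_iff_mul_le (lt_of_le_of_lt (Nat.zero_le M) hn.1)).mp this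
        have h2 : (M+1) * (M+1) ≤ (M+1) * n := Nat.mul_le_mul_left _ hn.1
        omega
      rw [← Finset.card_filter]
      have : (Ioc 0 M).filter (fun k => k ≤ N / n) = Ioc 0 (N / n) := by
        ext k; simp only [mem_filter, mem_Ioc]; omega
      rw [this, Nat.card_Ioc]
      exact (Nat.sub_zero _).symm
    rw [Finset.sum_congr rfl step1, Finset.sum_comm]
    refine Finset.sum_congr rfl fun k hk => ?_
    rw [mem_Ioc] at hk
    rw [← Finset.card_filter]
    have : (Ioc M N).filter (fun n => k ≤ N / n) = Ioc M (N / k) := by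
      ext n
      simp only [mem_filter, mem_Ioc]
      constructor
      · rintro ⟨⟨h1, h2⟩, h3⟩
        refine ⟨h1, ?_⟩
        rw [Nat.le_div_iff_mul_le hk.1]
        rw [Nat.le_div_iff_mul_le (by omega : 0 < n)] at h3
        linarith [h3]
      · rintro ⟨h1, h2⟩
        have hnN : n ≤ N := le_trans h2 (Nat.div_le_self N k)
        refine ⟨⟨h1, hnN⟩, ?_⟩
        rw [Nat.le_div_iff_mul_le (by omega : 0 < n)]
        rw [Nat.le_div_iff_mul_le hk.1] at h2
        calc k * n = n * k := Nat.mul_comm k n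
        _ ≤ N := h2
    rw [this, Nat.card_Ioc]
  rw [hIcc 1 N, hIcc 1 M, ← Finset.sum_Ioc_consecutive (fun k => N / k) (Nat.zero_le M) hMN,
    key]
  have : ∑ k ∈ Ioc 0 M, (N / k - M) + M * M = ∑ k ∈ Ioc 0 M, N / k := by
    have : ∑ k ∈ Ioc 0 M, (N / k - M) + ∑ k ∈ Ioc 0 M, M = ∑ k ∈ Ioc 0 M, N / k := by
      rw [← Finset.sum_add_distrib]
      refine Finset.sum_congr rfl fun k hk => ?_
      exact Nat.sub_add_cancel (hdivge k hk)
    rwa [Finset.sum_const, Nat.card_Ioc, Nat.sub_zero, smul_eq_mul] at this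
  omega

lemma harmonic_cast (M : ℕ) : ((harmonic M : ℚ) : ℝ) = ∑ n ∈ Icc 1 M, 1 / (n : ℝ) := by
  rw [harmonic]
  push_cast
  rw [← Finset.Ico_add_one_right_eq_Icc, Finset.sum_Ico_eq_sum_range]
  norm_num
  refine Finset.sum_congr rfl fun i _ => ?_
  rw [add_comm]

lemma gamma_lt_harm (M : ℕ) (hM : 1 ≤ M) :
    Real.eulerMascheroniConstant < (harmonic M : ℝ) - Real.log M := by
  have := Real.eulerMascheroniConstant_lt_eulerMascheroniSeq' M
  rwa [Real.eulerMascheroniSeq', if_neg (by omega)] at this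

lemma harm_lt_gamma (M : ℕ) (hM : 1 ≤ M) :
    (harmonic M : ℝ) - Real.log M < Real.eulerMascheroniConstant + 1 / M := by
  have h1 := Real.eulerMascheroniSeq_lt_eulerMascheroniConstant M
  rw [Real.eulerMascheroniSeq] at h1
  have hMpos : (0:ℝ) < M := by exact_mod_cast hM
  have h2 : Real.log (M + 1) - Real.log M ≤ 1 / M := by
    rw [← Real.log_div (by positivity) (by positivity)]
    have := Real.log_le_sub_one_of_pos (show (0:ℝ) < ((M:ℝ)+1)/M by positivity)
    have heq : ((M:ℝ)+1)/M - 1 = 1 / M := by field_simp; ring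
    linarith [heq ▸ this]
  linarith

/-- For `N ≥ 3`, `D(N) = N log N + (2γ − 1)N + O(√N)`, where `γ` is Euler's constant;
in particular `D(N) = O(N log N)`. -/
theorem sumDiv_asymptotic :
    ∃ C : ℝ, 0 < C ∧ ∀ N : ℕ, 3 ≤ N →
      |(sumDiv N : ℝ) - ((N : ℝ) * Real.log N + (2 * Real.eulerMascheroniConstant - 1) * N)|
          ≤ C * Real.sqrt N
      ∧ (sumDiv N : ℝ) ≤ C * ((N : ℝ) * Real.log N) := by
  refine ⟨30, by norm_num, fun N hN => ?_⟩
  set M := N.sqrt with hMdef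
  set S := ∑ k ∈ Icc 1 M, N / k with hSdef
  have hM1 : 1 ≤ M := Nat.sqrt_pos.mpr (by omega)
  have hMM : M * M ≤ N := by have := Nat.sqrt_le' N; nlinarith [this]
  have hN2 : N ≤ M * M + 2 * M := by have := Nat.lt_succ_sqrt' N; nlinarith [this]
  have hMN : M ≤ N := le_trans (Nat.le_mul_of_pos_left M hM1) hMM
  set g := Real.eulerMascheroniConstant with hgdef
  set nn := (N : ℝ) with hnn
  set m := (M : ℝ) with hm
  set s := (S : ℝ) with hs
  set h := ((harmonic M : ℚ) : ℝ) with hh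
  set L := Real.log nn with hL
  set l := Real.log m with hl
  -- basic real facts
  have hm1 : (1:ℝ) ≤ m := by rw [hm]; exact_mod_cast hM1
  have hm0 : (0:ℝ) < m := by linarith
  have hmm : m * m ≤ nn := by rw [hm, hnn]; exact_mod_cast hMM
  have hn2 : nn ≤ m * m + 2 * m := by rw [hm, hnn]; exact_mod_cast hN2
  have hmn : m ≤ nn := by rw [hm, hnn]; exact_mod_cast hMN
  have hnn3 : (3:ℝ) ≤ nn := by rw [hnn]; exact_mod_cast hN
  have hnn0 : (0:ℝ) < nn := by linarith
  have hnn4 : nn ≤ 4 * (m * m) := by nlinarith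
  -- key identity
  have key : (sumDiv N : ℝ) = 2 * s - m * m := by
    have hnat : sumDiv N + M * M = 2 * S := by
      rw [sumDiv_eq_sum_div]; exact hyperbola N (by omega)
    have := congrArg (Nat.cast : ℕ → ℝ) hnat
    push_cast at this
    rw [hs, hm]
    linarith
  -- bounds on s
  have f6 : s ≤ nn * h := by
    have hle : ∀ n ∈ Icc 1 M, ((N / n : ℕ) : ℝ) ≤ nn * (1 / n) := by
      intro n hn
      rw [mul_one_div]
      exact Nat.cast_div_le
    calc s = ∑ n ∈ Icc 1 M, ((N / n : ℕ) : ℝ) := by rw [hs, hSdef]; push_cast; rfl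
    _ ≤ ∑ n ∈ Icc 1 M, nn * (1 / n) := Finset.sum_le_sum hle
    _ = nn * ∑ n ∈ Icc 1 M, 1 / (n:ℝ) := by rw [Finset.mul_sum]
    _ = nn * h := by rw [hh, harmonic_cast]
  have f5 : nn * h - m ≤ s := by
    have hge : ∀ n ∈ Icc 1 M, nn * (1 / n) - 1 ≤ ((N / n : ℕ) : ℝ) := by
      intro n hn
      rw [mem_Icc] at hn
      have hn0 : 0 < n := hn.1
      have hn0' : (0:ℝ) < n := by exact_mod_cast hn0
      have hcast : (N:ℝ) < ((N/n:ℕ) + 1) * n := by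
        have h1 : n * (N/n) + N % n = N := Nat.div_add_mod N n
        have h2 : N % n < n := Nat.mod_lt N hn0
        have h1' := congrArg (Nat.cast : ℕ → ℝ) h1
        push_cast at h1'
        have h2' : ((N % n : ℕ):ℝ) < n := by exact_mod_cast h2
        nlinarith
      rw [mul_one_div, div_sub_one (by positivity), div_le_iff₀ hn0']
      nlinarith
    have : ∑ n ∈ Icc 1 M, (nn * (1 / n) - 1) ≤ ∑ n ∈ Icc 1 M, ((N / n : ℕ) : ℝ) :=
      Finset.sum_le_sum hge
    have heq : ∑ n ∈ Icc 1 M, (nn * (1 / (n:ℝ)) - 1) = nn * h - m := by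
      rw [Finset.sum_sub_distrib, ← Finset.mul_sum, Finset.sum_const, Nat.card_Icc, hh,
        harmonic_cast]
      simp [hm]
    have hseq : s = ∑ n ∈ Icc 1 M, ((N / n : ℕ) : ℝ) := by rw [hs, hSdef]; push_cast; rfl
    rw [hseq]
    linarith [heq ▸ this]
  -- harmonic bounds
  have f7 : g < h - l := gamma_lt_harm M hM1
  have f8 : h - l < g + 1 / m := harm_lt_gamma M hM1
  -- log bounds
  have hl2 : Real.log (m * m) = 2 * l := by
    rw [Real.log_mul (by positivity) (by positivity)]; ring
  have f9 : 2 * l ≤ L := by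
    rw [← hl2, hL]
    exact Real.log_le_log (by positivity) hmm
  have f10 : nn * (L - 2 * l) ≤ 8 * m := by
    have h1 : L - 2 * l = Real.log (nn / (m * m)) := by
      rw [Real.log_div (by positivity) (by positivity), hl2]
    have h2 : Real.log (nn / (m * m)) ≤ nn / (m * m) - 1 :=
      Real.log_le_sub_one_of_pos (by positivity)
    have h3 : nn / (m * m) - 1 ≤ 2 / m := by
      rw [div_sub_one (by positivity), div_le_div_iff₀ (by positivity) hm0]
      nlinarith
    have h4 : nn * (2 / m) ≤ 8 * m := by
      rw [mul_div_assoc', div_le_iff₀ hm0]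
      nlinarith
    have h5 : nn * (L - 2 * l) ≤ nn * (2 / m) := by
      apply mul_le_mul_of_nonneg_left _ (le_of_lt hnn0)
      rw [h1]; linarith
    linarith
  have f8m : 2 * (nn * h) ≤ 2 * (nn * l) + 2 * (g * nn) + 8 * m := by
    have h1 : h ≤ l + g + 1 / m := by linarith
    have h2 : nn * h ≤ nn * (l + g + 1 / m) :=
      mul_le_mul_of_nonneg_left h1 (le_of_lt hnn0)
    have h3 : nn * (1 / m) ≤ 4 * m := by
      rw [mul_one_div, div_le_iff₀ hm0]
      nlinarith
    nlinarith
  have f7m : 2 * (nn * l) + 2 * (g * nn) ≤ 2 * (nn * h) := by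
    have h1 : nn * (l + g) ≤ nn * h := by
      apply mul_le_mul_of_nonneg_left _ (le_of_lt hnn0)
      linarith
    nlinarith
  -- the error bound
  have herr : |(sumDiv N : ℝ) - (nn * L + (2 * g - 1) * nn)| ≤ 10 * m := by
    rw [key, abs_le]
    constructor
    · nlinarith [f5, f7m, f10, hmm]
    · nlinarith [f6, f8m, f9, hn2, hnn0]
  -- m ≤ sqrt nn
  have hsq : m ≤ Real.sqrt nn := by
    have : m = Real.sqrt (m * m) := (Real.sqrt_mul_self (by positivity)).symm
    rw [this]
    exact Real.sqrt_le_sqrt hmm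
  constructor
  · calc |(sumDiv N : ℝ) - (nn * L + (2 * g - 1) * nn)| ≤ 10 * m := herr
    _ ≤ 30 * Real.sqrt nn := by nlinarith [Real.sqrt_nonneg nn]
  · -- second part
    have hL1 : (1:ℝ) ≤ L := by
      have h3 : (1:ℝ) < Real.log 3 := by
        rw [Real.lt_log_iff_exp_lt (by norm_num)]
        linarith [Real.exp_one_lt_d9]
      have := Real.log_le_log (by norm_num : (0:ℝ) < 3) hnn3
      rw [hL]; linarith
    have hg : g < 2/3 := Real.eulerMascheroniConstant_lt_two_thirds
    have hg0 : 0 < g := lt_trans (by norm_num) Real.one_half_lt_eulerMascheroniConstant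
    rw [key]
    have e1 : 2 * s ≤ nn * L + 2 * (g * nn) + 8 * m := by nlinarith [f6, f8m, f9]
    nlinarith [mul_le_mul_of_nonneg_left hL1 (le_of_lt hnn0), hm0]
end

section
/- Let χ_s(θ) = χ(2^{3s}θ) for a Schwartz function χ with 1_{[−1/8,1/8]} ≤ χ ≤ 1_{[−1/4,1/4]}, s ≥ 1, 2^s ≤ Q < 2^{s+1}, and suppose Q^3 ≤ C_p τ for an appropriate constant. Then for integers x with 2^k τ < |x| ≤ 2^{k+1}τ, k ≥ 2, one has |(Γ_τ * χ̌_s)(x)| ≤ C · 2^{−2k}/τ. -/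
open Finset

/-- `e x = exp(2πix)`. -/
noncomputable def eFun (x : ℝ) : ℂ := Complex.exp (2 * Real.pi * Complex.I * x)

/-- `Γ̂_N(θ) = (1/N) ∑_{n=0}^{N−1} e(nθ)`, the multiplier of the standard average. -/
noncomputable def gammaHat (N : ℕ) (θ : ℝ) : ℂ :=
  (1 / (N : ℂ)) * ∑ n ∈ Finset.range N, eFun (n * θ)

/-- The Ramanujan sum `c_Q(x) = ∑_{0 ≤ A < Q, gcd(A,Q)=1} e(Ax/Q)`. -/
noncomputable def ramanujanSum (Q : ℕ) (x : ℤ) : ℂ :=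
  ∑ A ∈ (Finset.range Q).filter (fun A => A.Coprime Q), eFun ((A : ℝ) * x / Q)

/-- The dilated bump `χ_s(θ) = χ(2^{3s} θ)`. -/
noncomputable def chiS (χ : SchwartzMap ℝ ℝ) (s : ℕ) (θ : ℝ) : ℝ := χ ((2 : ℝ) ^ (3 * s) * θ)

/-- `χ̌_s(y) = ∫_ℝ χ_s(θ) e(yθ) dθ`, the inverse Fourier transform of the bump `χ_s`. -/
noncomputable def chiCheck (χ : SchwartzMap ℝ ℝ) (s : ℕ) (y : ℝ) : ℂ :=
  ∫ θ : ℝ, (chiS χ s θ : ℂ) * eFun (y * θ)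

/-- The convolution `(Γ_N * χ̌_s)(x) = (1/N) ∑_{n=0}^{N-1} χ̌_s(x+n)`. -/
noncomputable def gammaConvChiCheck (χ : SchwartzMap ℝ ℝ) (s N : ℕ) (x : ℤ) : ℂ :=
  (1 / (N : ℂ)) * ∑ n ∈ Finset.range N, chiCheck χ s ((x : ℝ) + n)

/-- The approximating multiplier
`L̂_{Q,N}(θ) = (2/Q) ∑_{A ∈ 𝔸_Q} Γ̂_N(θ − A/Q) χ_s(θ − A/Q)` for `2^s ≤ Q < 2^{s+1}`. -/
noncomputable def lHat (χ : SchwartzMap ℝ ℝ) (s Q N : ℕ) (θ : ℝ) : ℂ :=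
  (2 / (Q : ℂ)) * ∑ A ∈ (Finset.range Q).filter (fun A => A.Coprime Q),
    gammaHat N (θ - (A : ℝ) / Q) * (chiS χ s (θ - (A : ℝ) / Q) : ℂ)

/-- `χ` is a Schwartz bump with `1_{[−1/8,1/8]} ≤ χ ≤ 1_{[−1/4,1/4]}`. -/
def IsBump (χ : SchwartzMap ℝ ℝ) : Prop :=
  ∀ θ : ℝ, Set.indicator (Set.Icc (-(1/8) : ℝ) (1/8)) 1 θ ≤ χ θ ∧
    χ θ ≤ Set.indicator (Set.Icc (-(1/4) : ℝ) (1/4)) 1 θ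


section Aux
open MeasureTheory

/-- The complexification of a real Schwartz function. -/
noncomputable def chiComplex (χ : SchwartzMap ℝ ℝ) : SchwartzMap ℝ ℂ :=
  SchwartzMap.bilinLeftCLM (ContinuousLinearMap.lsmul ℝ ℝ : ℝ →L[ℝ] ℂ →L[ℝ] ℂ)
    (Function.HasTemperateGrowth.const (1 : ℂ)) χ

lemma chiComplex_apply (χ : SchwartzMap ℝ ℝ) (x : ℝ) : chiComplex χ x = (χ x : ℂ) := by
  show (χ x) • (1 : ℂ) = (χ x : ℂ)
  simp [Complex.real_smul]

lemma chiCheck_eq_fourier (χ : SchwartzMap ℝ ℝ) (s : ℕ) (y : ℝ) :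
    chiCheck χ s y = ((2 : ℝ) ^ (3 * s))⁻¹ •
      FourierTransform.fourier (chiComplex χ : ℝ → ℂ) (-(((2 : ℝ) ^ (3 * s))⁻¹ * y)) := by
  have ha : (0 : ℝ) < (2 : ℝ) ^ (3 * s) := by positivity
  set a : ℝ := (2 : ℝ) ^ (3 * s) with ha_def
  set g : ℝ → ℂ := fun u =>
    Complex.exp ((↑(-2 * Real.pi * u * (-(a⁻¹ * y))) : ℂ) * Complex.I) • chiComplex χ u with hg
  have hint : ∀ θ : ℝ, (chiS χ s θ : ℂ) * eFun (y * θ) = g (a * θ) := by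
    intro θ
    have hre : -2 * Real.pi * (a * θ) * (-(a⁻¹ * y)) = 2 * Real.pi * (y * θ) := by
      field_simp
    simp only [hg, chiS, chiComplex_apply, eFun, Complex.real_smul, hre]
    rw [mul_comm ((χ (a * θ) : ℂ)) _]
    congr 1
    push_cast
    ring
  have h1 : chiCheck χ s y = ∫ θ : ℝ, g (a * θ) := by
    unfold chiCheck
    congr 1
    ext θ
    exact hint θ
  rw [h1, MeasureTheory.Measure.integral_comp_mul_left g a,
    Real.fourier_real_eq_integral_exp_smul]
  congr 1
  rw [abs_of_pos (inv_pos.mpr ha)]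

lemma chiCheck_norm_bound (χ : SchwartzMap ℝ ℝ) :
    ∃ C : ℝ, 0 < C ∧ ∀ s : ℕ, ∀ y : ℝ, y ≠ 0 →
      ‖chiCheck χ s y‖ ≤ C * (2 : ℝ) ^ (3 * s) / y ^ 2 := by
  obtain ⟨C, hC, hdecay⟩ := (SchwartzMap.fourierTransformCLM ℝ (chiComplex χ)).decay 2 0
  refine ⟨C, hC, fun s y hy => ?_⟩
  have ha : (0 : ℝ) < (2 : ℝ) ^ (3 * s) := by positivity
  set a : ℝ := (2 : ℝ) ^ (3 * s) with ha_def
  have h1 := hdecay (-(a⁻¹ * y))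
  rw [norm_iteratedFDeriv_zero] at h1
  have hFT : (SchwartzMap.fourierTransformCLM ℝ (chiComplex χ)) (-(a⁻¹ * y))
      = FourierTransform.fourier (chiComplex χ : ℝ → ℂ) (-(a⁻¹ * y)) := by
    rfl
  rw [hFT] at h1
  have hw : ‖(-(a⁻¹ * y))‖ ^ 2 = y ^ 2 / a ^ 2 := by
    rw [norm_neg, Real.norm_eq_abs, sq_abs, mul_pow, inv_pow]
    ring
  rw [hw] at h1
  have hy2 : (0 : ℝ) < y ^ 2 := by positivity
  have hfrac : (0 : ℝ) < y ^ 2 / a ^ 2 := by positivity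
  have h2 : ‖FourierTransform.fourier (chiComplex χ : ℝ → ℂ) (-(a⁻¹ * y))‖ ≤ C / (y ^ 2 / a ^ 2) := by
    rw [le_div_iff₀ hfrac]
    linarith [h1]
  rw [chiCheck_eq_fourier, norm_smul, Real.norm_eq_abs, abs_of_pos (inv_pos.mpr ha)]
  calc a⁻¹ * ‖FourierTransform.fourier (chiComplex χ : ℝ → ℂ) (-(a⁻¹ * y))‖
      ≤ a⁻¹ * (C / (y ^ 2 / a ^ 2)) := by
        exact mul_le_mul_of_nonneg_left h2 (by positivity)
    _ = C * a / y ^ 2 := by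
        field_simp

end Aux

/-- Decay bound: if `2^s ≤ Q < 2^{s+1}`, `Q^3 ≤ c_p·τ`, and `2^k τ < |x| ≤ 2^{k+1} τ`
with `k ≥ 2`, then `|(Γ_τ * χ̌_s)(x)| ≤ C · 2^{−2k}/τ`. -/
theorem gammaConvChiCheck_decay (χ : SchwartzMap ℝ ℝ) (hχ : IsBump χ)
    (cp : ℝ) (hcp : 0 < cp) :
    ∃ C : ℝ, 0 < C ∧ ∀ τ s Q k : ℕ, ∀ x : ℤ, 1 ≤ τ → 1 ≤ s →
      2 ^ s ≤ Q → Q < 2 ^ (s + 1) → (Q : ℝ) ^ 3 ≤ cp * τ → 2 ≤ k →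
      (2 : ℝ) ^ k * τ < |(x : ℝ)| → |(x : ℝ)| ≤ (2 : ℝ) ^ (k + 1) * τ →
      ‖gammaConvChiCheck χ s τ x‖ ≤ C * ((2 : ℝ) ^ (2 * k))⁻¹ / τ := by
  obtain ⟨C0, hC0, hbound⟩ := chiCheck_norm_bound χ
  refine ⟨2 * C0 * cp, by positivity, ?_⟩
  intro τ s Q k x hτ hs hQ1 hQ2 hQcp hk hx1 hx2
  have hτ' : (0 : ℝ) < τ := by exact_mod_cast hτ
  have h2k : (4 : ℝ) ≤ (2 : ℝ) ^ k := by
    calc (4 : ℝ) = 2 ^ 2 := by norm_num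
      _ ≤ 2 ^ k := pow_le_pow_right₀ (by norm_num) hk
  have h2kpos : (0 : ℝ) < (2 : ℝ) ^ k := by positivity
  have h3s : (2 : ℝ) ^ (3 * s) ≤ cp * τ := by
    have hQr : (2 : ℝ) ^ s ≤ (Q : ℝ) := by exact_mod_cast hQ1
    have : (2 : ℝ) ^ (3 * s) = ((2 : ℝ) ^ s) ^ 3 := by
      rw [← pow_mul, mul_comm]
    rw [this]
    calc ((2 : ℝ) ^ s) ^ 3 ≤ (Q : ℝ) ^ 3 := by
          apply pow_le_pow_left₀ (by positivity) hQr
      _ ≤ cp * τ := hQcp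
  set B : ℝ := 2 * C0 * cp * ((2 : ℝ) ^ (2 * k))⁻¹ / τ with hB
  have hterm : ∀ n ∈ Finset.range τ, ‖chiCheck χ s ((x : ℝ) + n)‖ ≤ B := by
    intro n hn
    have hnτ : (n : ℝ) < τ := by exact_mod_cast Finset.mem_range.mp hn
    set y : ℝ := (x : ℝ) + n with hy_def
    have habs : |(x : ℝ)| - (n : ℝ) ≤ |y| := by
      have := abs_add_le y (-(n : ℝ))
      simp only [hy_def] at this ⊢
      rw [abs_neg, abs_of_nonneg (by positivity : (0:ℝ) ≤ (n:ℝ))] at this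
      have h0 : (x : ℝ) + n + -(n : ℝ) = (x : ℝ) := by ring
      rw [h0] at this
      linarith
    have hy : (3 / 4 : ℝ) * ((2 : ℝ) ^ k * τ) < |y| := by
      have hτle : (τ : ℝ) ≤ (1 / 4 : ℝ) * ((2 : ℝ) ^ k * τ) := by nlinarith
      nlinarith [hx1]
    have hypos : (0 : ℝ) < |y| := lt_of_le_of_lt (by positivity) hy
    have hy0 : y ≠ 0 := by
      intro h; rw [h] at hypos; simp at hypos
    have hy2 : ((3 / 4 : ℝ) * ((2 : ℝ) ^ k * τ)) ^ 2 < y ^ 2 := by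
      have := pow_lt_pow_left₀ hy (by positivity) (n := 2) (by norm_num)
      rwa [sq_abs] at this
    refine (hbound s y hy0).trans ?_
    have h2k2 : (2 : ℝ) ^ (2 * k) = ((2 : ℝ) ^ k) ^ 2 := by
      rw [← pow_mul, mul_comm]
    have hRHS : 2 * C0 * cp * ((2 : ℝ) ^ (2 * k))⁻¹ / τ
        = (2 * C0 * cp) / (((2 : ℝ) ^ k) ^ 2 * τ) := by
      rw [h2k2]; field_simp
    rw [hB, hRHS, div_le_div_iff₀ (by positivity) (by positivity)]
    have key1 : C0 * (2 : ℝ) ^ (3 * s) ≤ C0 * (cp * τ) :=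
      mul_le_mul_of_nonneg_left h3s hC0.le
    have key2 : 2 * C0 * cp * (((3 / 4 : ℝ) * ((2 : ℝ) ^ k * τ)) ^ 2)
        ≤ 2 * C0 * cp * y ^ 2 :=
      mul_le_mul_of_nonneg_left hy2.le (by positivity)
    have hmono : (0 : ℝ) ≤ C0 * cp * ((2 : ℝ) ^ k) ^ 2 * (τ : ℝ) ^ 2 := by positivity
    have hint : C0 * (2 : ℝ) ^ (3 * s) * (((2 : ℝ) ^ k) ^ 2 * τ)
        ≤ C0 * (cp * τ) * (((2 : ℝ) ^ k) ^ 2 * τ) :=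
      mul_le_mul_of_nonneg_right key1 (by positivity)
    have he1 : C0 * (cp * (τ : ℝ)) * (((2 : ℝ) ^ k) ^ 2 * τ)
        = C0 * cp * ((2 : ℝ) ^ k) ^ 2 * (τ : ℝ) ^ 2 := by ring
    have he2 : 2 * C0 * cp * (((3 / 4 : ℝ) * ((2 : ℝ) ^ k * τ)) ^ 2)
        = 9 / 8 * (C0 * cp * ((2 : ℝ) ^ k) ^ 2 * (τ : ℝ) ^ 2) := by ring
    calc C0 * (2 : ℝ) ^ (3 * s) * (((2 : ℝ) ^ k) ^ 2 * τ)
        ≤ C0 * (cp * τ) * (((2 : ℝ) ^ k) ^ 2 * τ) := hint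
      _ ≤ 2 * C0 * cp * (((3 / 4 : ℝ) * ((2 : ℝ) ^ k * τ)) ^ 2) := by
          rw [he1, he2]; linarith [hmono]
      _ ≤ 2 * C0 * cp * y ^ 2 := key2
  have hnorm1 : ‖(1 / (τ : ℂ))‖ = 1 / (τ : ℝ) := by
    rw [norm_div, norm_one, Complex.norm_natCast]
  unfold gammaConvChiCheck
  rw [norm_mul, hnorm1]
  calc 1 / (τ : ℝ) * ‖∑ n ∈ Finset.range τ, chiCheck χ s ((x : ℝ) + n)‖
      ≤ 1 / (τ : ℝ) * (τ * B) := by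
        apply mul_le_mul_of_nonneg_left _ (by positivity)
        refine (norm_sum_le _ _).trans ?_
        have := Finset.sum_le_card_nsmul (Finset.range τ) (fun n => ‖chiCheck χ s ((x : ℝ) + n)‖)
          B hterm
        simpa [nsmul_eq_mul] using this
    _ = B := by
        field_simp
    _ = 2 * C0 * cp * ((2 : ℝ) ^ (2 * k))⁻¹ / τ := rfl
end

section
/- The multipliers L̂_{Q,N} for 2^s ≤ Q < 2^{s+1} have pairwise disjoint supports, and ‖∑_{2^s ≤ Q < 2^{s+1}} L̂_{Q,N}‖_∞ ≤ C · 2^{−s} for an absolute constant C. -/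
open Finset

lemma eFun_norm (x : ℝ) : ‖eFun x‖ = 1 := by
  unfold eFun
  rw [Complex.norm_exp]
  norm_num [Complex.mul_re]

lemma gammaHat_norm_le {N : ℕ} (hN : 1 ≤ N) (θ : ℝ) : ‖gammaHat N θ‖ ≤ 1 := by
  have hN0 : (0:ℝ) < N := by exact_mod_cast hN
  unfold gammaHat
  rw [norm_mul]
  have h1 : ‖(1 / (N:ℂ))‖ = 1 / (N:ℝ) := by
    rw [norm_div, norm_one, Complex.norm_natCast]
  have h2 : ‖∑ n ∈ Finset.range N, eFun (n * θ)‖ ≤ (N:ℝ) := by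
    calc ‖∑ n ∈ Finset.range N, eFun (n*θ)‖ ≤ ∑ n ∈ Finset.range N, ‖eFun (n*θ)‖ :=
          norm_sum_le _ _
      _ = (N:ℝ) := by
          simp only [eFun_norm]
          simp
  rw [h1, div_mul_eq_mul_div, one_mul, div_le_one hN0]
  exact h2

lemma chi_nonneg {χ : SchwartzMap ℝ ℝ} (hχ : IsBump χ) (x : ℝ) : 0 ≤ χ x :=
  le_trans (Set.indicator_nonneg (fun _ _ => zero_le_one) x) (hχ x).1

lemma chi_le_one {χ : SchwartzMap ℝ ℝ} (hχ : IsBump χ) (x : ℝ) : χ x ≤ 1 := by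
  refine (hχ x).2.trans ?_
  rw [Set.indicator_apply]
  split <;> norm_num

lemma chi_eq_zero {χ : SchwartzMap ℝ ℝ} (hχ : IsBump χ) {x : ℝ} (hx : 1/4 < |x|) : χ x = 0 := by
  have hmem : x ∉ Set.Icc (-(1/4):ℝ) (1/4) := by
    rw [Set.mem_Icc]
    rcases lt_abs.mp hx with h | h
    · intro ⟨_, h2⟩; linarith
    · intro ⟨h1, _⟩; linarith
  have h1 := (hχ x).2
  rw [Set.indicator_of_notMem hmem] at h1
  exact le_antisymm h1 (chi_nonneg hχ x)

lemma abs_le_of_chiS_ne_zero {χ : SchwartzMap ℝ ℝ} (hχ : IsBump χ) {s : ℕ} {θ : ℝ}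
    (h : chiS χ s θ ≠ 0) : |θ| ≤ 1/(4 * 2^(3*s)) := by
  by_contra hc
  push_neg at hc
  apply h
  unfold chiS
  apply chi_eq_zero hχ
  have hp : (0:ℝ) < 2^(3*s) := by positivity
  rw [abs_mul, abs_of_pos hp]
  rw [div_lt_iff₀ (by positivity)] at hc
  nlinarith

lemma sep {s : ℕ} (hs : 1 ≤ s) {Q Q' A A' : ℕ}
    (hQ1 : 2^s ≤ Q) (hQ2 : Q < 2^(s+1)) (hQ'1 : 2^s ≤ Q') (hQ'2 : Q' < 2^(s+1))
    (hcA : A.Coprime Q) (hcA' : A'.Coprime Q')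
    (hne : ¬(A = A' ∧ Q = Q')) (θ : ℝ)
    (h1 : |θ - (A:ℝ)/Q| ≤ 1/(4 * 2^(3*s)))
    (h2 : |θ - (A':ℝ)/Q'| ≤ 1/(4 * 2^(3*s))) : False := by
  have hQ0 : 0 < Q := lt_of_lt_of_le (pow_pos (by norm_num) s) hQ1
  have hQ'0 : 0 < Q' := lt_of_lt_of_le (pow_pos (by norm_num) s) hQ'1
  have hAA : (A:ℤ) * Q' - (A':ℤ) * Q ≠ 0 := by
    intro h
    have h' : A * Q' = A' * Q := by exact_mod_cast sub_eq_zero.mp h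
    have hd1 : Q ∣ Q' := Nat.Coprime.dvd_of_dvd_mul_left hcA.symm ⟨A', by rw [h']; ring⟩
    have hd2 : Q' ∣ Q := Nat.Coprime.dvd_of_dvd_mul_left hcA'.symm ⟨A, by rw [← h']; ring⟩
    have hQQ : Q = Q' := Nat.dvd_antisymm hd1 hd2
    have hAeq : A = A' := by
      apply Nat.eq_of_mul_eq_mul_right hQ0
      rw [hQQ, h', hQQ]
    exact hne ⟨hAeq, hQQ⟩
  have hQQ'pos : (0:ℝ) < (Q:ℝ) * Q' := by positivity
  have key : 1 / ((Q:ℝ) * Q') ≤ |(A:ℝ)/Q - (A':ℝ)/Q'| := by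
    have heq : (A:ℝ)/Q - (A':ℝ)/Q' = (((A:ℤ) * Q' - (A':ℤ) * Q : ℤ) : ℝ) / ((Q:ℝ) * Q') := by
      push_cast
      field_simp
    rw [heq, abs_div, abs_of_pos hQQ'pos]
    gcongr
    exact_mod_cast Int.one_le_abs hAA
  set p : ℝ := (2:ℝ)^s with hpdef
  have hp2 : (2:ℝ) ≤ p := by
    rw [hpdef]
    calc (2:ℝ) = 2^1 := by norm_num
      _ ≤ 2^s := by gcongr <;> norm_num
  have hp3 : (2:ℝ)^(3*s) = p^3 := by rw [hpdef, mul_comm, pow_mul]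
  have hQr : (Q:ℝ) < 2*p := by
    have : (Q:ℝ) < (2:ℝ)^(s+1) := by exact_mod_cast hQ2
    rwa [pow_succ, mul_comm] at this
  have hQ'r : (Q':ℝ) < 2*p := by
    have : (Q':ℝ) < (2:ℝ)^(s+1) := by exact_mod_cast hQ'2
    rwa [pow_succ, mul_comm] at this
  have hQp : p ≤ (Q:ℝ) := by rw [hpdef]; exact_mod_cast hQ1
  have hQ'p : p ≤ (Q':ℝ) := by rw [hpdef]; exact_mod_cast hQ'1
  rw [hp3] at h1 h2
  have tri : |(A:ℝ)/Q - (A':ℝ)/Q'| ≤ |θ - (A:ℝ)/Q| + |θ - (A':ℝ)/Q'| := by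
    calc |(A:ℝ)/Q - (A':ℝ)/Q'| ≤ |(A:ℝ)/Q - θ| + |θ - (A':ℝ)/Q'| := abs_sub_le _ _ _
      _ = |θ - (A:ℝ)/Q| + |θ - (A':ℝ)/Q'| := by rw [abs_sub_comm]
  have hsum : 1/(4*p^3) + 1/(4*p^3) = 1/(2*p^3) := by ring
  have e1 : 1 / ((Q:ℝ) * Q') ≤ 1/(2*p^3) := by linarith
  have hQ'pos : (0:ℝ) < Q' := by exact_mod_cast hQ'0
  have e2 : (Q:ℝ) * Q' < 2*p^3 := by
    nlinarith [mul_lt_mul_of_pos_right hQr hQ'pos,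
      mul_lt_mul_of_pos_left hQ'r (show (0:ℝ) < 2*p by linarith),
      mul_nonneg (sq_nonneg p) (show (0:ℝ) ≤ p - 2 by linarith)]
  have e3 : 1/(2*p^3) < 1/((Q:ℝ) * Q') := one_div_lt_one_div_of_lt hQQ'pos e2
  linarith

lemma exists_close (χ : SchwartzMap ℝ ℝ) (hχ : IsBump χ) {s Q N : ℕ} {θ : ℝ}
    (h : lHat χ s Q N θ ≠ 0) :
    ∃ A ∈ (Finset.range Q).filter (fun A => A.Coprime Q),
      |θ - (A:ℝ)/Q| ≤ 1/(4 * 2^(3*s)) := by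
  unfold lHat at h
  have hsum : ∑ A ∈ (Finset.range Q).filter (fun A => A.Coprime Q),
      gammaHat N (θ - (A : ℝ) / Q) * (chiS χ s (θ - (A : ℝ) / Q) : ℂ) ≠ 0 :=
    fun h0 => h (by rw [h0, mul_zero])
  obtain ⟨A, hA, hterm⟩ := Finset.exists_ne_zero_of_sum_ne_zero hsum
  refine ⟨A, hA, ?_⟩
  have hchi : chiS χ s (θ - (A:ℝ)/Q) ≠ 0 := by
    intro h0
    exact hterm (by rw [h0, Complex.ofReal_zero, mul_zero])
  exact abs_le_of_chiS_ne_zero hχ hchi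

lemma lHat_ne_zero_disjoint (χ : SchwartzMap ℝ ℝ) (hχ : IsBump χ) {s N Q Q' : ℕ} (hs : 1 ≤ s)
    (hQ1 : 2^s ≤ Q) (hQ2 : Q < 2^(s+1)) (hQ'1 : 2^s ≤ Q') (hQ'2 : Q' < 2^(s+1))
    (hne : Q ≠ Q') {θ : ℝ} (h : lHat χ s Q N θ ≠ 0) (h' : lHat χ s Q' N θ ≠ 0) : False := by
  obtain ⟨A, hA, hd⟩ := exists_close χ hχ h
  obtain ⟨A', hA', hd'⟩ := exists_close χ hχ h'
  rw [Finset.mem_filter] at hA hA'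
  exact sep hs hQ1 hQ2 hQ'1 hQ'2 hA.2 hA'.2 (fun hh => hne hh.2) θ hd hd'

lemma lHat_norm_le (χ : SchwartzMap ℝ ℝ) (hχ : IsBump χ) {s Q N : ℕ} (hs : 1 ≤ s)
    (hN : 1 ≤ N) (hQ1 : 2^s ≤ Q) (hQ2 : Q < 2^(s+1)) (θ : ℝ) :
    ‖lHat χ s Q N θ‖ ≤ 2 * ((2:ℝ)^s)⁻¹ := by
  by_cases h : lHat χ s Q N θ = 0
  · rw [h, norm_zero]; positivity
  have hQ0 : 0 < Q := lt_of_lt_of_le (pow_pos (by norm_num) s) hQ1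
  have hQ0' : (0:ℝ) < Q := by exact_mod_cast hQ0
  obtain ⟨A0, hA0, hterm0⟩ := Finset.exists_ne_zero_of_sum_ne_zero
    (show ∑ A ∈ (Finset.range Q).filter (fun A => A.Coprime Q),
      gammaHat N (θ - (A : ℝ) / Q) * (chiS χ s (θ - (A : ℝ) / Q) : ℂ) ≠ 0 from
      fun h0 => h (by unfold lHat; rw [h0, mul_zero]))
  have hchi0 : chiS χ s (θ - (A0:ℝ)/Q) ≠ 0 := by
    intro h0
    exact hterm0 (by rw [h0, Complex.ofReal_zero, mul_zero])
  have hd0 := abs_le_of_chiS_ne_zero hχ hchi0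
  rw [Finset.mem_filter] at hA0
  have hsingle : ∑ A ∈ (Finset.range Q).filter (fun A => A.Coprime Q),
      gammaHat N (θ - (A : ℝ) / Q) * (chiS χ s (θ - (A : ℝ) / Q) : ℂ)
      = gammaHat N (θ - (A0 : ℝ) / Q) * (chiS χ s (θ - (A0 : ℝ) / Q) : ℂ) := by
    apply Finset.sum_eq_single_of_mem _ (Finset.mem_filter.mpr hA0)
    intro A hA hAne
    rw [Finset.mem_filter] at hA
    by_contra hterm
    have hchi : chiS χ s (θ - (A:ℝ)/Q) ≠ 0 := by
      intro h0
      exact hterm (by rw [h0, Complex.ofReal_zero, mul_zero])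
    have hd := abs_le_of_chiS_ne_zero hχ hchi
    exact sep hs hQ1 hQ2 hQ1 hQ2 hA.2 hA0.2 (fun hh => hAne hh.1) θ hd hd0
  have hnorm : ‖gammaHat N (θ - (A0 : ℝ) / Q) * (chiS χ s (θ - (A0 : ℝ) / Q) : ℂ)‖ ≤ 1 := by
    rw [norm_mul, Complex.norm_real]
    have g1 := gammaHat_norm_le hN (θ - (A0:ℝ)/Q)
    have g2a : 0 ≤ chiS χ s (θ - (A0:ℝ)/Q) := chi_nonneg hχ _
    have g2b : chiS χ s (θ - (A0:ℝ)/Q) ≤ 1 := chi_le_one hχ _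
    have g2 : |chiS χ s (θ - (A0:ℝ)/Q)| ≤ 1 := by
      rw [abs_of_nonneg g2a]; exact g2b
    calc ‖gammaHat N (θ - (A0:ℝ)/Q)‖ * |chiS χ s (θ - (A0:ℝ)/Q)|
        ≤ 1 * 1 := by
          apply mul_le_mul g1 g2 (abs_nonneg _) (by norm_num)
      _ = 1 := by norm_num
  unfold lHat
  rw [hsingle, norm_mul]
  have hc : ‖(2 / (Q:ℂ))‖ = 2 / (Q:ℝ) := by
    rw [norm_div, Complex.norm_natCast]
    norm_num
  rw [hc]
  have h2Q : 2 / (Q:ℝ) ≤ 2 * ((2:ℝ)^s)⁻¹ := by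
    rw [div_eq_mul_inv]
    gcongr
    exact_mod_cast hQ1
  calc 2 / (Q:ℝ) * ‖gammaHat N (θ - (A0 : ℝ) / Q) * (chiS χ s (θ - (A0 : ℝ) / Q) : ℂ)‖
      ≤ 2 / (Q:ℝ) * 1 := by
        apply mul_le_mul_of_nonneg_left hnorm (by positivity)
    _ = 2 / (Q:ℝ) := by ring
    _ ≤ 2 * ((2:ℝ)^s)⁻¹ := h2Q

/-- For `2^s ≤ Q < 2^{s+1}` the multipliers `L̂_{Q,N}` have pairwise disjoint supports, and
`‖∑_{2^s ≤ Q < 2^{s+1}} L̂_{Q,N}‖_∞ ≤ C · 2^{−s}`. -/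
theorem lHat_disjoint_and_bound (χ : SchwartzMap ℝ ℝ) (hχ : IsBump χ) :
    ∃ C : ℝ, 0 < C ∧ ∀ s N : ℕ, 1 ≤ s → 1 ≤ N →
      (∀ Q Q' : ℕ, 2 ^ s ≤ Q → Q < 2 ^ (s + 1) → 2 ^ s ≤ Q' → Q' < 2 ^ (s + 1) → Q ≠ Q' →
        Disjoint (Function.support (lHat χ s Q N)) (Function.support (lHat χ s Q' N)))
      ∧ ∀ θ : ℝ, ‖∑ Q ∈ Finset.Ico (2 ^ s) (2 ^ (s + 1)), lHat χ s Q N θ‖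
          ≤ C * ((2 : ℝ) ^ s)⁻¹ := by
  refine ⟨2, by norm_num, fun s N hs hN => ⟨?_, ?_⟩⟩
  · intro Q Q' hQ1 hQ2 hQ'1 hQ'2 hne
    rw [Set.disjoint_left]
    intro θ hθ hθ'
    exact lHat_ne_zero_disjoint χ hχ hs hQ1 hQ2 hQ'1 hQ'2 hne hθ hθ'
  · intro θ
    by_cases hex : ∃ Q0 ∈ Finset.Ico (2^s) (2^(s+1)), lHat χ s Q0 N θ ≠ 0
    · obtain ⟨Q0, hQ0mem, hQ0ne⟩ := hex
      rw [Finset.mem_Ico] at hQ0mem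
      have hsingle : ∑ Q ∈ Finset.Ico (2^s) (2^(s+1)), lHat χ s Q N θ = lHat χ s Q0 N θ := by
        apply Finset.sum_eq_single_of_mem _ (Finset.mem_Ico.mpr hQ0mem)
        intro Q hQ hQne
        rw [Finset.mem_Ico] at hQ
        by_contra hne
        exact lHat_ne_zero_disjoint χ hχ hs hQ.1 hQ.2 hQ0mem.1 hQ0mem.2 hQne hne hQ0ne
      rw [hsingle]
      exact lHat_norm_le χ hχ hs hN hQ0mem.1 hQ0mem.2 θ
    · push_neg at hex
      rw [Finset.sum_eq_zero hex, norm_zero]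
      positivity
end
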